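/- The softmax function on ℝⁿ is 1-Lipschitz with respect to the Euclidean norm: for all a, b ∈ ℝⁿ, ‖softmax(a) - softmax(b)‖₂ ≤ ‖a - b‖₂. -/

import Mathlib

noncomputable def softmax {n : ℕ} (a : Fin n → ℝ) (j : Fin n) : ℝ :=
  Real.exp (a j) / ∑ i, Real.exp (a i)

namespace SoftmaxAux

open Real Finset ContinuousLinearMap

variable {n : ℕ}

noncomputable def S (a : Fin n → ℝ) : ℝ := ∑ i, Real.exp (a i)

lemma S_pos [NeZero n] (a : Fin n → ℝ) : 0 < S a :=
  Finset.sum_pos (fun i _ => Real.exp_pos _) Finset.univ_nonempty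

lemma softmax_nonneg [NeZero n] (a : Fin n → ℝ) (j : Fin n) : 0 ≤ softmax a j :=
  div_nonneg (Real.exp_pos _).le (S_pos a).le

lemma softmax_le_one [NeZero n] (a : Fin n → ℝ) (j : Fin n) : softmax a j ≤ 1 :=
  (div_le_one (S_pos a)).mpr (Finset.single_le_sum (fun i _ => (Real.exp_pos (a i)).le)
    (Finset.mem_univ j))

lemma softmax_sum [NeZero n] (a : Fin n → ℝ) : ∑ j, softmax a j = 1 := by
  simp only [softmax]
  rw [← Finset.sum_div]
  exact div_self (S_pos a).ne'

/-- The Jacobian of softmax at a point with softmax values `p`, as a map on the pi type. -/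
noncomputable def Jpi (p : Fin n → ℝ) : (Fin n → ℝ) →L[ℝ] (Fin n → ℝ) :=
  ContinuousLinearMap.pi fun j =>
    p j • ((ContinuousLinearMap.proj j : (Fin n → ℝ) →L[ℝ] ℝ) -
      ∑ i, p i • (ContinuousLinearMap.proj i : (Fin n → ℝ) →L[ℝ] ℝ))

lemma Jpi_apply (p v : Fin n → ℝ) (j : Fin n) :
    Jpi p v j = p j * (v j - ∑ i, p i * v i) := by
  simp [Jpi, ContinuousLinearMap.sum_apply]

lemma hasFDerivAt_softmax [NeZero n] (a : Fin n → ℝ) :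
    HasFDerivAt (fun x : Fin n → ℝ => softmax x) (Jpi (softmax a)) a := by
  apply hasFDerivAt_pi''
  intro j
  have hu : ∀ i : Fin n, HasFDerivAt (fun x : Fin n → ℝ => Real.exp (x i))
      (Real.exp (a i) • (ContinuousLinearMap.proj i : (Fin n → ℝ) →L[ℝ] ℝ)) a := fun i =>
    (hasFDerivAt_apply i a).exp
  have hS : HasFDerivAt (fun x : Fin n → ℝ => S x)
      (∑ i, Real.exp (a i) • (ContinuousLinearMap.proj i : (Fin n → ℝ) →L[ℝ] ℝ)) a :=
    HasFDerivAt.fun_sum fun i _ => hu i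
  have hinv : HasFDerivAt (fun x : Fin n → ℝ => (S x)⁻¹)
      ((-(S a ^ 2)⁻¹) • ∑ i, Real.exp (a i) • (ContinuousLinearMap.proj i : (Fin n → ℝ) →L[ℝ] ℝ)) a :=
    (hasDerivAt_inv (S_pos a).ne').comp_hasFDerivAt a hS
  have hmul : HasFDerivAt (fun x : Fin n → ℝ => Real.exp (x j) * (S x)⁻¹) _ a := (hu j).mul hinv
  have hfun : (fun x : Fin n → ℝ => softmax x j)
      = fun x : Fin n → ℝ => Real.exp (x j) * (S x)⁻¹ := by
    funext x; simp [softmax, S, div_eq_mul_inv]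
  rw [show (fun x : Fin n → ℝ => softmax x j) = fun x => Real.exp (x j) * (S x)⁻¹ from hfun]
  convert hmul using 1
  rotate_right
  ext v
  have hS0 : S a ≠ 0 := (S_pos a).ne'
  have hTv : (∑ i, Real.exp (a i) • (ContinuousLinearMap.proj i : (Fin n → ℝ) →L[ℝ] ℝ)) v
      = ∑ i, Real.exp (a i) * v i := by
    simp [ContinuousLinearMap.sum_apply]
  have hsm : ∑ i, softmax a i * v i = (∑ i, Real.exp (a i) * v i) / S a := by
    rw [Finset.sum_div]
    exact Finset.sum_congr rfl fun i _ => by rw [softmax, S]; ring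
  simp only [ContinuousLinearMap.coe_comp', Function.comp_apply, Jpi_apply,
    ContinuousLinearMap.add_apply, ContinuousLinearMap.coe_smul', Pi.smul_apply, smul_eq_mul,
    ContinuousLinearMap.proj_apply, hTv, hsm]
  rw [show softmax a j = Real.exp (a j) / S a from rfl]
  field_simp
  ring
  all_goals rfl

lemma key_sum (p v : Fin n → ℝ) (h0 : ∀ j, 0 ≤ p j) (h1 : ∀ j, p j ≤ 1)
    (hs : ∑ j, p j = 1) :
    ∑ j, (p j * (v j - ∑ i, p i * v i)) ^ 2 ≤ ∑ j, v j ^ 2 := by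
  set s : ℝ := ∑ i, p i * v i with hsdef
  calc ∑ j, (p j * (v j - s)) ^ 2
      ≤ ∑ j, p j * (v j - s) ^ 2 := by
        refine Finset.sum_le_sum fun j _ => ?_
        rw [mul_pow]
        apply mul_le_mul_of_nonneg_right _ (sq_nonneg _)
        calc p j ^ 2 = p j * p j := sq (p j) ▸ (sq (p j)).symm ▸ rfl
          _ ≤ 1 * p j := mul_le_mul_of_nonneg_right (h1 j) (h0 j)
          _ = p j := one_mul _
    _ = (∑ j, p j * v j ^ 2) - s ^ 2 := by
        have : ∀ j : Fin n, p j * (v j - s) ^ 2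
            = p j * v j ^ 2 - 2 * s * (p j * v j) + s ^ 2 * p j := fun j => by ring
        rw [Finset.sum_congr rfl fun j _ => this j, Finset.sum_add_distrib,
          Finset.sum_sub_distrib, ← Finset.mul_sum, ← Finset.mul_sum, ← hsdef, hs]
        ring
    _ ≤ ∑ j, p j * v j ^ 2 := by nlinarith [sq_nonneg s]
    _ ≤ ∑ j, v j ^ 2 := by
        refine Finset.sum_le_sum fun j _ => ?_
        calc p j * v j ^ 2 ≤ 1 * v j ^ 2 :=
              mul_le_mul_of_nonneg_right (h1 j) (sq_nonneg _)
          _ = v j ^ 2 := one_mul _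

/-- The Jacobian on Euclidean space. -/
noncomputable def JE (a : Fin n → ℝ) :
    EuclideanSpace ℝ (Fin n) →L[ℝ] EuclideanSpace ℝ (Fin n) :=
  ((PiLp.continuousLinearEquiv 2 ℝ (fun _ : Fin n => ℝ)).symm :
      (Fin n → ℝ) →L[ℝ] EuclideanSpace ℝ (Fin n)).comp
    ((Jpi (softmax a)).comp
      ((PiLp.continuousLinearEquiv 2 ℝ (fun _ : Fin n => ℝ)) :
        EuclideanSpace ℝ (Fin n) →L[ℝ] (Fin n → ℝ)))

lemma JE_apply (a : Fin n → ℝ) (v : EuclideanSpace ℝ (Fin n)) (j : Fin n) :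
    JE a v j = softmax a j * (v j - ∑ i, softmax a i * v i) := by
  simp [JE, Jpi_apply]

lemma JE_norm_le [NeZero n] (a : Fin n → ℝ) : ‖JE a‖ ≤ 1 := by
  refine ContinuousLinearMap.opNorm_le_bound _ zero_le_one fun v => ?_
  rw [one_mul, EuclideanSpace.norm_eq, EuclideanSpace.norm_eq]
  apply Real.sqrt_le_sqrt
  have := key_sum (softmax a) (fun j => v j) (softmax_nonneg a) (softmax_le_one a)
    (softmax_sum a)
  simp only [Real.norm_eq_abs, sq_abs, JE_apply]
  exact this

lemma gE_hasFDerivAt [NeZero n] (x : EuclideanSpace ℝ (Fin n)) :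
    HasFDerivAt
      (fun y : EuclideanSpace ℝ (Fin n) =>
        ((PiLp.continuousLinearEquiv 2 ℝ (fun _ : Fin n => ℝ)).symm
          (softmax ((PiLp.continuousLinearEquiv 2 ℝ (fun _ : Fin n => ℝ)) y)) :
          EuclideanSpace ℝ (Fin n)))
      (JE x) x := by
  set φ := PiLp.continuousLinearEquiv 2 ℝ (fun _ : Fin n => ℝ)
  have h1 : HasFDerivAt (fun y : EuclideanSpace ℝ (Fin n) => softmax (φ y))
      ((Jpi (softmax (φ x))).comp (φ : EuclideanSpace ℝ (Fin n) →L[ℝ] (Fin n → ℝ))) x :=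
    (hasFDerivAt_softmax (φ x)).comp x (φ.hasFDerivAt)
  exact (φ.symm.comp_hasFDerivAt_iff.mpr h1 : _)

end SoftmaxAux

theorem softmax_one_lipschitz {n : ℕ} (a b : Fin n → ℝ) :
    Real.sqrt (∑ j, (softmax a j - softmax b j) ^ 2) ≤
    Real.sqrt (∑ j, (a j - b j) ^ 2) := by
  rcases Nat.eq_zero_or_pos n with h | h
  · subst h; simp
  haveI : NeZero n := ⟨h.ne'⟩
  open SoftmaxAux in
  set φ := PiLp.continuousLinearEquiv 2 ℝ (fun _ : Fin n => ℝ)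
  set a' : EuclideanSpace ℝ (Fin n) := φ.symm a
  set b' : EuclideanSpace ℝ (Fin n) := φ.symm b
  have key := convex_univ.norm_image_sub_le_of_norm_hasFDerivWithin_le
    (f := fun y : EuclideanSpace ℝ (Fin n) => (φ.symm (softmax (φ y)) : EuclideanSpace ℝ (Fin n)))
    (f' := fun x => SoftmaxAux.JE x) (C := 1)
    (fun x _ => (SoftmaxAux.gE_hasFDerivAt x).hasFDerivWithinAt)
    (fun x _ => SoftmaxAux.JE_norm_le x) (Set.mem_univ b') (Set.mem_univ a')
  rw [one_mul] at key
  have hL : ‖(φ.symm (softmax (φ a')) : EuclideanSpace ℝ (Fin n)) - φ.symm (softmax (φ b'))‖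
      = Real.sqrt (∑ j, (softmax a j - softmax b j) ^ 2) := by
    rw [EuclideanSpace.norm_eq]
    congr 1
    refine Finset.sum_congr rfl fun j _ => ?_
    simp [a', b', φ, Real.norm_eq_abs, sq_abs, PiLp.coe_continuousLinearEquiv]
  have hR : ‖a' - b'‖ = Real.sqrt (∑ j, (a j - b j) ^ 2) := by
    rw [EuclideanSpace.norm_eq]
    congr 1
    refine Finset.sum_congr rfl fun j _ => ?_
    simp [a', b', φ, Real.norm_eq_abs, sq_abs]
  rw [hL, hR] at key
  exact key
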